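/- Let v : ℝⁿ → ℝ (n ≥ 3) be a nonnegative C² solution of Δv = n(n−2) v^{N−1} with N = 2n/(n−2), where Δ = −∑∂²/∂xᵢ² is the positive Laplacian, satisfying v(0) = 1 and 0 ≤ v ≤ 1. Then v > 0 everywhere on ℝⁿ. -/

import Mathlib

open Real RealInnerProductSpace

section Aux

variable {E : Type*} [NormedAddCommGroup E] [NormedSpace ℝ E]

private lemma lineDeriv_fst (u : E → ℝ) (hu : ContDiff ℝ 2 u) (x ξ : E) (t : ℝ) :
    HasDerivAt (fun s : ℝ => u (x + s • ξ)) (fderiv ℝ u (x + t • ξ) ξ) t := by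
  have hL : HasDerivAt (fun s : ℝ => x + s • ξ) ξ t := by
    simpa using ((hasDerivAt_id t).smul_const ξ).const_add x
  exact ((hu.differentiable (by norm_num)).differentiableAt.hasFDerivAt).comp_hasDerivAt t hL

private lemma contDiff_fderiv_apply (u : E → ℝ) (hu : ContDiff ℝ 2 u) (ξ : E) :
    ContDiff ℝ 1 (fun y => fderiv ℝ u y ξ) :=
  (ContinuousLinearMap.apply ℝ ℝ ξ).contDiff.comp (hu.fderiv_right (by norm_num))

private lemma lineDeriv_snd (u : E → ℝ) (hu : ContDiff ℝ 2 u) (x ξ : E) :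
    HasDerivAt (fun t : ℝ => fderiv ℝ u (x + t • ξ) ξ)
      (fderiv ℝ (fun y => fderiv ℝ u y ξ) x ξ) 0 := by
  have hL : HasDerivAt (fun s : ℝ => x + s • ξ) ξ 0 := by
    simpa using ((hasDerivAt_id (0:ℝ)).smul_const ξ).const_add x
  have h2 := contDiff_fderiv_apply u hu ξ
  have h3 : HasFDerivAt (fun y => fderiv ℝ u y ξ)
      (fderiv ℝ (fun y => fderiv ℝ u y ξ) x) (x + (0:ℝ) • ξ) := by
    simpa using ((h2.differentiable (by norm_num)).differentiableAt).hasFDerivAt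
  exact h3.comp_hasDerivAt 0 hL

private lemma snd_eq (u : E → ℝ) (hu : ContDiff ℝ 2 u) (x ξ : E) :
    fderiv ℝ (fun y => fderiv ℝ u y ξ) x ξ
      = deriv (deriv (fun t : ℝ => u (x + t • ξ))) 0 := by
  have hd : deriv (fun t : ℝ => u (x + t • ξ)) = fun t : ℝ => fderiv ℝ u (x + t • ξ) ξ :=
    funext fun t => (lineDeriv_fst u hu x ξ t).deriv
  rw [hd]
  exact ((lineDeriv_snd u hu x ξ).deriv).symm

private lemma second_test {g : ℝ → ℝ} (hg : ContDiff ℝ 2 g) (h : IsLocalMin g 0) :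
    0 ≤ deriv (deriv g) 0 := by
  by_contra hneg
  push_neg at hneg
  have hg1 : ContDiff ℝ 1 (deriv g) := by
    have := (contDiff_succ_iff_deriv (n := 1)).mp (by exact_mod_cast hg)
    exact this.2.2
  have hcont : Continuous (deriv (deriv g)) := hg1.continuous_deriv le_rfl
  have hd0 : deriv g 0 = 0 := h.deriv_eq_zero
  obtain ⟨δ, hδ, hball⟩ := Metric.continuousAt_iff.mp hcont.continuousAt
    (-(deriv (deriv g) 0)) (by linarith)
  have hneg' : ∀ t ∈ Set.Icc (0:ℝ) (δ/2), deriv (deriv g) t < 0 := by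
    intro t ht
    have hdt : dist t 0 < δ := by
      rw [Real.dist_eq, sub_zero, abs_of_nonneg ht.1]; linarith [ht.2]
    have h2 := hball hdt
    rw [Real.dist_eq] at h2
    have h3 := abs_lt.mp h2
    linarith [h3.2]
  have hanti : StrictAntiOn (deriv g) (Set.Icc 0 (δ/2)) := by
    apply strictAntiOn_of_deriv_neg (convex_Icc _ _) (hg1.continuous.continuousOn)
    intro t ht
    rw [interior_Icc] at ht
    exact hneg' t ⟨le_of_lt ht.1, le_of_lt ht.2⟩
  have hderivneg : ∀ t ∈ Set.Ioc (0:ℝ) (δ/2), deriv g t < 0 := by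
    intro t ht
    have := hanti (Set.left_mem_Icc.mpr (by linarith)) ⟨le_of_lt ht.1, ht.2⟩ ht.1
    rwa [hd0] at this
  have hanti2 : StrictAntiOn g (Set.Icc 0 (δ/2)) := by
    apply strictAntiOn_of_deriv_neg (convex_Icc _ _) (hg.continuous.continuousOn)
    intro t ht
    rw [interior_Icc] at ht
    exact hderivneg t ⟨ht.1, le_of_lt ht.2⟩
  obtain ⟨r, hr, hrmin⟩ := Metric.eventually_nhds_iff.mp h
  set t := min (δ/2) r / 2 with ht
  have htpos : 0 < t := by positivity
  have h1 : g t < g 0 := by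
    apply hanti2 (Set.left_mem_Icc.mpr (by positivity)) _ htpos
    refine ⟨le_of_lt htpos, ?_⟩
    have : t ≤ δ/2/2 := by
      rw [ht]; gcongr; exact min_le_left _ _
    linarith
  have h2 : g 0 ≤ g t := by
    apply hrmin
    rw [Real.dist_eq, sub_zero, abs_of_pos htpos]
    have : t ≤ r/2 := by rw [ht]; gcongr; exact min_le_right _ _
    linarith
  linarith

private lemma snd_sub (u₁ u₂ : E → ℝ) (h₁ : ContDiff ℝ 2 u₁) (h₂ : ContDiff ℝ 2 u₂)
    (c : ℝ) (x ξ : E) :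
    fderiv ℝ (fun y => fderiv ℝ (fun z => u₁ z - c * u₂ z) y ξ) x ξ
      = fderiv ℝ (fun y => fderiv ℝ u₁ y ξ) x ξ - c * fderiv ℝ (fun y => fderiv ℝ u₂ y ξ) x ξ := by
  have h1' := contDiff_fderiv_apply u₁ h₁ ξ
  have h2' := contDiff_fderiv_apply u₂ h₂ ξ
  have hfd : (fun y => fderiv ℝ (fun z => u₁ z - c * u₂ z) y ξ)
      = fun y => fderiv ℝ u₁ y ξ - c * fderiv ℝ u₂ y ξ := by
    funext y
    have d1 : DifferentiableAt ℝ u₁ y := (h₁.differentiable (by norm_num)).differentiableAt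
    have d2 : DifferentiableAt ℝ u₂ y := (h₂.differentiable (by norm_num)).differentiableAt
    rw [fderiv_fun_sub d1 (d2.const_mul c), fderiv_const_mul d2]
    simp
  rw [hfd]
  have D1 : DifferentiableAt ℝ (fun y => fderiv ℝ u₁ y ξ) x :=
    (h1'.differentiable (by norm_num)).differentiableAt
  have D2 : DifferentiableAt ℝ (fun y => fderiv ℝ u₂ y ξ) x :=
    (h2'.differentiable (by norm_num)).differentiableAt
  rw [fderiv_fun_sub D1 (D2.const_mul c), fderiv_const_mul D2]
  simp

private lemma contDiff_bump (α Cc : ℝ) {F : Type*} [NormedAddCommGroup F]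
    [InnerProductSpace ℝ F] :
    ContDiff ℝ 2 (fun z : F => Real.exp (-α * ‖z‖^2) - Cc) := by
  show ContDiff ℝ 2 fun z : F => Real.exp ((-α) * ‖z‖^2) - Cc
  have h1 : ContDiff ℝ 2 (fun z : F => ‖z‖^2) := contDiff_id.norm_sq (𝕜 := ℝ)
  exact ((contDiff_const.mul h1).exp).sub contDiff_const

private lemma snd_bump (n : ℕ) (α Cc : ℝ) (x : EuclideanSpace ℝ (Fin n)) (i : Fin n) :
    fderiv ℝ (fun y => fderiv ℝ (fun z : EuclideanSpace ℝ (Fin n) =>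
        Real.exp (-α * ‖z‖^2) - Cc) y (EuclideanSpace.single i 1)) x (EuclideanSpace.single i 1)
      = Real.exp (-α * ‖x‖^2) * (4*α^2*(x i)^2 - 2*α) := by
  set ξ := EuclideanSpace.single i (1:ℝ) with hξ
  rw [snd_eq _ (contDiff_bump α Cc) x ξ]
  set s := ‖x‖^2 with hs
  set b := x i with hb
  have hline : (fun t : ℝ => Real.exp (-α * ‖x + t • ξ‖^2) - Cc)
      = fun t : ℝ => Real.exp (-α * (s + 2*b*t + t^2)) - Cc := by
    funext t
    have hexp : ‖x + t • ξ‖^2 = s + 2*b*t + t^2 := by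
      rw [norm_add_sq_real, real_inner_smul_right]
      have h1 : (inner ℝ x ξ : ℝ) = b := by
        rw [hξ]
        simpa using EuclideanSpace.inner_single_right (𝕜 := ℝ) i 1 x
      have h2 : ‖t • ξ‖ = |t| := by
        rw [norm_smul, hξ, EuclideanSpace.norm_single]
        simp [Real.norm_eq_abs]
      rw [h1, h2, sq_abs]
      ring
    rw [hexp]
  show deriv (deriv fun t : ℝ => Real.exp (-α * ‖x + t • ξ‖^2) - Cc) 0 = _
  rw [hline]
  have hq : ∀ t : ℝ, HasDerivAt (fun t : ℝ => s + 2*b*t + t^2) (2*b + 2*t) t := by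
    intro t
    have : HasDerivAt (fun t : ℝ => s + 2*b*t + t^2) (0 + 2*b*1 + 2*t^1) t :=
      ((hasDerivAt_const t s).add ((hasDerivAt_id t).const_mul (2*b))).add (hasDerivAt_pow 2 t)
    convert this using 1
    ring
  have hE : ∀ t : ℝ, HasDerivAt (fun t : ℝ => Real.exp (-α * (s + 2*b*t + t^2)) - Cc)
      (Real.exp (-α * (s + 2*b*t + t^2)) * (-α * (2*b + 2*t))) t := by
    intro t
    exact (((hq t).const_mul (-α)).exp).sub_const Cc
  have hd1 : deriv (fun t : ℝ => Real.exp (-α * (s + 2*b*t + t^2)) - Cc)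
      = fun t : ℝ => Real.exp (-α * (s + 2*b*t + t^2)) * (-α * (2*b + 2*t)) :=
    funext fun t => (hE t).deriv
  rw [hd1]
  have hE2 : HasDerivAt (fun t : ℝ => Real.exp (-α * (s + 2*b*t + t^2)))
      (Real.exp (-α * (s + 2*b*0 + 0^2)) * (-α * (2*b + 2*0))) 0 := ((hq 0).const_mul (-α)).exp
  have hlin : HasDerivAt (fun t : ℝ => -α * (2*b + 2*t)) (-α * 2) 0 := by
    have : HasDerivAt (fun t : ℝ => 2*b + 2*t) (2*1) 0 :=
      ((hasDerivAt_id (0:ℝ)).const_mul 2).const_add (2*b)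
    simpa using this.const_mul (-α)
  have hprod : HasDerivAt (fun t : ℝ => Real.exp (-α * (s + 2*b*t + t^2)) * (-α * (2*b + 2*t)))
      _ 0 := hE2.mul hlin
  rw [hprod.deriv]
  norm_num
  ring

private lemma euclid_norm_sq (n : ℕ) (x : EuclideanSpace ℝ (Fin n)) :
    ‖x‖^2 = ∑ i : Fin n, (x i)^2 := by
  rw [EuclideanSpace.norm_eq, Real.sq_sqrt (by positivity)]
  simp [sq_abs]

end Aux

/-- The positive (geometric) Laplacian `Δ = −∑ ∂²/∂xᵢ²` on `ℝⁿ`. -/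
noncomputable def posLaplacian (n : ℕ) (v : EuclideanSpace ℝ (Fin n) → ℝ)
    (x : EuclideanSpace ℝ (Fin n)) : ℝ :=
  -∑ i : Fin n,
    fderiv ℝ (fun y => fderiv ℝ v y (EuclideanSpace.single i 1)) x (EuclideanSpace.single i 1)

set_option maxHeartbeats 1000000 in
/-- A nonnegative `C²` solution of `Δv = n(n−2) v^{N−1}` (`N = 2n/(n−2)`) on `ℝⁿ`, `n ≥ 3`,
with `v(0) = 1` and `0 ≤ v ≤ 1`, is everywhere positive. -/
theorem pos_of_solution_bubble_equation
    (n : ℕ) (hn : 3 ≤ n)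
    (v : EuclideanSpace ℝ (Fin n) → ℝ)
    (hv : ContDiff ℝ 2 v)
    (hvnonneg : ∀ x, 0 ≤ v x) (hvle : ∀ x, v x ≤ 1)
    (hv0 : v 0 = 1)
    (heq : ∀ x, posLaplacian n v x =
      n * (n - 2) * v x ^ ((2 * (n:ℝ) / ((n:ℝ) - 2)) - 1)) :
    ∀ x, 0 < v x := by
  intro xstar
  by_contra hx
  push_neg at hx
  have hzero : v xstar = 0 := le_antisymm hx (hvnonneg _)
  set Z : Set (EuclideanSpace ℝ (Fin n)) := {y | v y = 0} with hZ
  have hZc : IsClosed Z := isClosed_eq hv.continuous continuous_const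
  have hZne : Z.Nonempty := ⟨xstar, hzero⟩
  have h0Z : (0 : EuclideanSpace ℝ (Fin n)) ∉ Z := by simp [hZ, hv0]
  set d := Metric.infDist (0 : EuclideanSpace ℝ (Fin n)) Z with hdd
  have hd : 0 < d := (hZc.notMem_iff_infDist_pos hZne).mp h0Z
  obtain ⟨x₀, hx₀Z, hx₀d⟩ := hZc.exists_infDist_eq_dist hZne 0
  have hnx₀ : ‖x₀‖ = d := by
    rw [hdd, hx₀d, dist_comm, dist_zero_right]
  -- positivity in the open ball of radius d
  have hpos : ∀ y : EuclideanSpace ℝ (Fin n), ‖y‖ < d → 0 < v y := by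
    intro y hy
    rcases lt_or_eq_of_le (hvnonneg y) with h | h
    · exact h
    · exfalso
      have hyZ : y ∈ Z := h.symm
      have := Metric.infDist_le_dist_of_mem hyZ (x := (0 : EuclideanSpace ℝ (Fin n)))
      rw [dist_zero_left] at this
      rw [hdd] at hy
      linarith
  -- minimum on inner sphere
  have hi0 : (⟨0, by omega⟩ : Fin n) = ⟨0, by omega⟩ := rfl
  have hSne : (Metric.sphere (0 : EuclideanSpace ℝ (Fin n)) (d/2)).Nonempty := by
    refine ⟨(d/2) • EuclideanSpace.single (⟨0, by omega⟩ : Fin n) (1:ℝ), ?_⟩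
    rw [Metric.mem_sphere, dist_zero_right, norm_smul, EuclideanSpace.norm_single]
    simp only [Real.norm_eq_abs, norm_one, mul_one, abs_div]
    rw [abs_of_pos hd]
    norm_num
  obtain ⟨xm, hxmS, hxm⟩ := (isCompact_sphere (0 : EuclideanSpace ℝ (Fin n)) (d/2)).exists_isMinOn
    hSne hv.continuous.continuousOn
  set m := v xm with hm
  have hxmn : ‖xm‖ = d/2 := by
    rw [Metric.mem_sphere] at hxmS
    rw [← dist_zero_right]
    exact hxmS
  have hmpos : 0 < m := hpos xm (by rw [hxmn]; linarith)
  -- the barrier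
  set α := 8 * (n:ℝ) / d^2 with hα
  have hnpos : (0:ℝ) < n := by exact_mod_cast Nat.lt_of_lt_of_le (by norm_num) hn
  have hαpos : 0 < α := by positivity
  set Cc := Real.exp (-α * (2*d)^2) with hCc
  set h : EuclideanSpace ℝ (Fin n) → ℝ := fun y => Real.exp (-α * ‖y‖^2) - Cc with hh
  have hhC : ContDiff ℝ 2 h := contDiff_bump α Cc
  set w : EuclideanSpace ℝ (Fin n) → ℝ := fun y => v y - m * h y with hw
  have hwC : ContDiff ℝ 2 w := hv.sub (contDiff_const.mul hhC)
  set A := Metric.closedBall (0 : EuclideanSpace ℝ (Fin n)) (2*d)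
      \ Metric.ball (0 : EuclideanSpace ℝ (Fin n)) (d/2) with hA
  have hAc : IsCompact A := (isCompact_closedBall _ _).diff Metric.isOpen_ball
  have hx₀A : x₀ ∈ A := by
    constructor
    · rw [Metric.mem_closedBall, dist_zero_right, hnx₀]; linarith
    · rw [Metric.mem_ball, dist_zero_right, hnx₀]; intro hcon; linarith
  obtain ⟨z, hzA, hz⟩ := hAc.exists_isMinOn ⟨x₀, hx₀A⟩ hwC.continuous.continuousOn
  have hz1 : d/2 ≤ ‖z‖ := by
    have := hzA.2
    rw [Metric.mem_ball, dist_zero_right] at this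
    linarith [not_lt.mp this]
  have hz2 : ‖z‖ ≤ 2*d := by
    have := hzA.1
    rwa [Metric.mem_closedBall, dist_zero_right] at this
  -- no interior minimum
  have hnotint : ¬ (d/2 < ‖z‖ ∧ ‖z‖ < 2*d) := by
    rintro ⟨hin1, hin2⟩
    -- local minimum
    have hU : IsOpen (Metric.ball (0 : EuclideanSpace ℝ (Fin n)) (2*d)
        \ Metric.closedBall (0 : EuclideanSpace ℝ (Fin n)) (d/2)) :=
      Metric.isOpen_ball.sdiff Metric.isClosed_closedBall
    have hzU : z ∈ Metric.ball (0 : EuclideanSpace ℝ (Fin n)) (2*d)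
        \ Metric.closedBall (0 : EuclideanSpace ℝ (Fin n)) (d/2) := by
      constructor
      · rw [Metric.mem_ball, dist_zero_right]; exact hin2
      · rw [Metric.mem_closedBall, dist_zero_right]; intro hcon; linarith [hin1]
    have hUA : (Metric.ball (0 : EuclideanSpace ℝ (Fin n)) (2*d)
        \ Metric.closedBall (0 : EuclideanSpace ℝ (Fin n)) (d/2)) ⊆ A := by
      rintro y ⟨hy1, hy2⟩
      exact ⟨Metric.ball_subset_closedBall hy1, fun hy3 => hy2 (Metric.ball_subset_closedBall hy3)⟩
    have hlocal : IsLocalMin w z :=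
      hz.isLocalMin (Filter.mem_of_superset (hU.mem_nhds hzU) hUA)
    -- each coordinate second derivative of w at z is нnonneg
    have hcoord : ∀ i : Fin n,
        0 ≤ fderiv ℝ (fun y => fderiv ℝ w y (EuclideanSpace.single i 1)) z
          (EuclideanSpace.single i 1) := by
      intro i
      set ξ := EuclideanSpace.single i (1:ℝ) with hξ
      rw [snd_eq w hwC z ξ]
      apply second_test
      · exact hwC.comp (contDiff_const.add (contDiff_id.smul contDiff_const))
      · have hline : Continuous (fun t : ℝ => z + t • ξ) :=
          continuous_const.add (continuous_id.smul continuous_const)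
        have h0 : IsLocalMin w (z + (0:ℝ) • ξ) := by simpa using hlocal
        have := IsLocalMin.comp_continuous (f := w) (g := fun t : ℝ => z + t • ξ)
          (b := (0:ℝ)) h0 hline.continuousAt
        exact this
    have hsum : 0 ≤ ∑ i : Fin n,
        fderiv ℝ (fun y => fderiv ℝ w y (EuclideanSpace.single i 1)) z
          (EuclideanSpace.single i 1) :=
      Finset.sum_nonneg fun i _ => hcoord i
    -- split the sum
    have hsplit : ∀ i : Fin n,
        fderiv ℝ (fun y => fderiv ℝ w y (EuclideanSpace.single i 1)) z
          (EuclideanSpace.single i 1)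
        = fderiv ℝ (fun y => fderiv ℝ v y (EuclideanSpace.single i 1)) z
            (EuclideanSpace.single i 1)
          - m * (Real.exp (-α * ‖z‖^2) * (4*α^2*(z i)^2 - 2*α)) := by
      intro i
      rw [hw]
      rw [snd_sub v h hv hhC m z (EuclideanSpace.single i 1)]
      rw [hh]
      rw [snd_bump n α Cc z i]
    rw [Finset.sum_congr rfl (fun i _ => hsplit i)] at hsum
    rw [Finset.sum_sub_distrib] at hsum
    -- the v-part
    have hvpart : ∑ i : Fin n,
        fderiv ℝ (fun y => fderiv ℝ v y (EuclideanSpace.single i 1)) z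
          (EuclideanSpace.single i 1)
        = -(n * (n - 2) * v z ^ ((2 * (n:ℝ) / ((n:ℝ) - 2)) - 1)) := by
      have := heq z
      unfold posLaplacian at this
      linarith
    rw [hvpart] at hsum
    -- the h-part
    have hhpart : ∑ i : Fin n, m * (Real.exp (-α * ‖z‖^2) * (4*α^2*(z i)^2 - 2*α))
        = m * (Real.exp (-α * ‖z‖^2) * (4*α^2*‖z‖^2 - 2*n*α)) := by
      rw [← Finset.mul_sum]
      congr 1
      rw [← Finset.mul_sum]
      congr 1
      rw [Finset.sum_sub_distrib]
      rw [← Finset.mul_sum, ← euclid_norm_sq n z]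
      simp [Finset.sum_const, Finset.card_univ]
      ring
    rw [hhpart] at hsum
    -- contradiction by arithmetic
    have hP : 0 ≤ v z ^ ((2 * (n:ℝ) / ((n:ℝ) - 2)) - 1) := Real.rpow_nonneg (hvnonneg z) _
    have hn2 : (0:ℝ) ≤ (n:ℝ) * ((n:ℝ) - 2) := by
      have : (3:ℝ) ≤ (n:ℝ) := by exact_mod_cast hn
      nlinarith
    have hexppos : 0 < Real.exp (-α * ‖z‖^2) := Real.exp_pos _
    have hspos : d^2/4 < ‖z‖^2 := by nlinarith [hz1, hd]
    have hbig : 0 < 4*α^2*‖z‖^2 - 2*n*α := by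
      have hα' : α * d^2 = 8*(n:ℝ) := by
        rw [hα]; field_simp
      have h2αs : 2*α*‖z‖^2 > (n:ℝ) := by
        nlinarith [mul_lt_mul_of_pos_left hspos hαpos, hα', hnpos]
      nlinarith [hαpos]
    nlinarith [hsum, hP, hn2, hexppos, hbig, hmpos,
      mul_pos hmpos (mul_pos hexppos hbig), mul_nonneg hn2 hP]
  -- so the minimum is on the boundary, where w ≥ 0
  have hwz : 0 ≤ w z := by
    rcases eq_or_lt_of_le hz1 with hc1 | hc1
    · -- inner sphere: v z ≥ m, h z ≤ 1
      have hzS : z ∈ Metric.sphere (0 : EuclideanSpace ℝ (Fin n)) (d/2) := by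
        rw [Metric.mem_sphere, dist_zero_right]; exact hc1.symm
      have hvz : m ≤ v z := hxm hzS
      have hhz : h z ≤ 1 := by
        rw [hh]
        have h1 : Real.exp (-α * ‖z‖^2) ≤ 1 := by
          rw [show (1:ℝ) = Real.exp 0 by simp]
          apply Real.exp_le_exp.mpr
          have : 0 ≤ α * ‖z‖^2 := by positivity
          linarith
        have h2 : 0 < Cc := Real.exp_pos _
        simp only
        linarith
      rw [hw]
      simp only
      nlinarith [hmpos]
    · rcases eq_or_lt_of_le hz2 with hc2 | hc2
      · -- outer sphere: h z = 0
        have hhz : h z = 0 := by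
          rw [hh, hCc]
          simp only
          rw [hc2]
          ring
        rw [hw]
        simp only
        rw [hhz]
        simpa using hvnonneg z
      · exact absurd ⟨hc1, hc2⟩ hnotint
  -- but w x₀ < 0
  have hwx₀ : w x₀ < 0 := by
    have hvx₀ : v x₀ = 0 := hx₀Z
    have hhx₀ : 0 < h x₀ := by
      rw [hh, hCc]
      simp only
      rw [hnx₀]
      have : -α * (2*d)^2 < -α * d^2 := by nlinarith [mul_pos hαpos (pow_pos hd 2)]
      have := Real.exp_lt_exp.mpr this
      linarith
    rw [hw]
    simp only
    rw [hvx₀]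
    nlinarith [hmpos, hhx₀]
  have := hz hx₀A
  have : w z ≤ w x₀ := this
  linarith
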